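/- arXiv:2305.14978 — 6 statements merged into one kernel-verified Lean document; each statement's English description precedes it below -/
import Mathlib

section
/- Let A be the block upper-triangular matrix [[A₁₁, A₁₂],[0, A₂₂]]. Then exp(Ah) = [[exp(A₁₁h), Φ₁₂(h)],[0, exp(A₂₂h)]] where Φ₁₂(h) = ∫₀^h exp(A₁₁(h-τ)) A₁₂ exp(A₂₂ τ) dτ. -/
open MeasureTheory Matrix
attribute [local instance] Matrix.frobeniusNormedAddCommGroup Matrix.frobeniusNormedSpace
attribute [local instance] Matrix.frobeniusNormedRing Matrix.frobeniusNormedAlgebra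

section aux

variable {l p q r : Type*} [Fintype l] [Fintype p] [Fintype q] [Fintype r]

theorem vanLoan_frob_norm_blk₁₁ (X : Matrix p l ℝ) :
    ‖(fromBlocks X 0 0 0 : Matrix (p ⊕ r) (l ⊕ q) ℝ)‖ = ‖X‖ := by
  simp_rw [Matrix.frobenius_norm_def]
  congr 1
  rw [Fintype.sum_sum_type]
  simp [Fintype.sum_sum_type, Real.zero_rpow two_ne_zero]

theorem vanLoan_frob_norm_blk₁₂ (Y : Matrix p q ℝ) :
    ‖(fromBlocks 0 Y 0 0 : Matrix (p ⊕ r) (l ⊕ q) ℝ)‖ = ‖Y‖ := by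
  simp_rw [Matrix.frobenius_norm_def]
  congr 1
  rw [Fintype.sum_sum_type]
  simp [Fintype.sum_sum_type, Real.zero_rpow two_ne_zero]

theorem vanLoan_frob_norm_blk₂₂ (W : Matrix r q ℝ) :
    ‖(fromBlocks 0 0 0 W : Matrix (p ⊕ r) (l ⊕ q) ℝ)‖ = ‖W‖ := by
  simp_rw [Matrix.frobenius_norm_def]
  congr 1
  rw [Fintype.sum_sum_type]
  simp [Fintype.sum_sum_type, Real.zero_rpow two_ne_zero]

theorem vanLoan_isBLM₁₁ :
    IsBoundedLinearMap ℝ (fun X : Matrix p l ℝ => (fromBlocks X 0 0 0 : Matrix (p ⊕ r) (l ⊕ q) ℝ)) :=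
  { map_add := fun X Y => by simp [Matrix.fromBlocks_add]
    map_smul := fun c X => by simp [Matrix.fromBlocks_smul]
    bound := ⟨1, one_pos, fun X => by rw [vanLoan_frob_norm_blk₁₁, one_mul]⟩ }

theorem vanLoan_isBLM₁₂ :
    IsBoundedLinearMap ℝ (fun Y : Matrix p q ℝ => (fromBlocks 0 Y 0 0 : Matrix (p ⊕ r) (l ⊕ q) ℝ)) :=
  { map_add := fun X Y => by simp [Matrix.fromBlocks_add]
    map_smul := fun c X => by simp [Matrix.fromBlocks_smul]
    bound := ⟨1, one_pos, fun X => by rw [vanLoan_frob_norm_blk₁₂, one_mul]⟩ }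

theorem vanLoan_isBLM₂₂ :
    IsBoundedLinearMap ℝ (fun W : Matrix r q ℝ => (fromBlocks 0 0 0 W : Matrix (p ⊕ r) (l ⊕ q) ℝ)) :=
  { map_add := fun X Y => by simp [Matrix.fromBlocks_add]
    map_smul := fun c X => by simp [Matrix.fromBlocks_smul]
    bound := ⟨1, one_pos, fun X => by rw [vanLoan_frob_norm_blk₂₂, one_mul]⟩ }

theorem vanLoan_hasDerivAt_fromBlocks {f : ℝ → Matrix p l ℝ} {g : ℝ → Matrix p q ℝ}
    {k : ℝ → Matrix r q ℝ} {f' : Matrix p l ℝ} {g' : Matrix p q ℝ} {k' : Matrix r q ℝ} {t : ℝ}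
    (hf : HasDerivAt f f' t) (hg : HasDerivAt g g' t) (hk : HasDerivAt k k' t) :
    HasDerivAt (fun t => (fromBlocks (f t) (g t) 0 (k t) : Matrix (p ⊕ r) (l ⊕ q) ℝ))
      (fromBlocks f' g' 0 k') t := by
  have h1 := (vanLoan_isBLM₁₁ (l := l) (p := p) (q := q) (r := r)).hasFDerivAt.comp_hasDerivAt t hf
  have h2 := (vanLoan_isBLM₁₂ (l := l) (p := p) (q := q) (r := r)).hasFDerivAt.comp_hasDerivAt t hg
  have h3 := (vanLoan_isBLM₂₂ (l := l) (p := p) (q := q) (r := r)).hasFDerivAt.comp_hasDerivAt t hk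
  have h := (h1.add h2).add h3
  convert h using 1
  · rfl
  · rfl
  · rfl
  · funext s
    simp [Function.comp, Matrix.fromBlocks_add]
  · show _ = fromBlocks f' 0 0 0 + fromBlocks 0 g' 0 0 + fromBlocks 0 0 0 k'
    simp [Matrix.fromBlocks_add]

theorem vanLoan_isBBM_mul {I J K : Type*} [Fintype I] [Fintype J] [Fintype K] :
    IsBoundedBilinearMap ℝ (fun ps : Matrix I J ℝ × Matrix J K ℝ => ps.1 * ps.2) :=
  { add_left := fun X X' Y => Matrix.add_mul X X' Y
    smul_left := fun c X Y => Matrix.smul_mul c X Y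
    add_right := fun X Y Y' => Matrix.mul_add X Y Y'
    smul_right := fun c X Y => Matrix.mul_smul X c Y
    bound := ⟨1, one_pos, fun X Y => by simpa using Matrix.frobenius_norm_mul X Y⟩ }

theorem vanLoan_hasDerivAt_mul {I J K : Type*} [Fintype I] [Fintype J] [Fintype K]
    {f : ℝ → Matrix I J ℝ} {g : ℝ → Matrix J K ℝ} {f' : Matrix I J ℝ} {g' : Matrix J K ℝ} {t : ℝ}
    (hf : HasDerivAt f f' t) (hg : HasDerivAt g g' t) :
    HasDerivAt (fun t => f t * g t) (f' * g t + f t * g') t := by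
  have h := ((vanLoan_isBBM_mul (I := I) (J := J) (K := K)).hasFDerivAt (f t, g t)).comp_hasDerivAt t (hf.prodMk hg)
  convert h using 1
  · rfl
  · rfl
  · rfl
  · rfl
  show _ = ((vanLoan_isBBM_mul (I := I) (J := J) (K := K)).deriv (f t, g t)) (f', g')
  rw [IsBoundedBilinearMap.deriv_apply]
  exact add_comm _ _

theorem vanLoan_continuous_mul {I J K : Type*} [Fintype I] [Fintype J] [Fintype K]
    {f : ℝ → Matrix I J ℝ} {g : ℝ → Matrix J K ℝ}
    (hf : Continuous f) (hg : Continuous g) : Continuous fun t => f t * g t :=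
  vanLoan_isBBM_mul.continuous.comp (hf.prodMk hg)

theorem vanLoan_exp_add_smul {I : Type*} [Fintype I] [DecidableEq I]
    (B : Matrix I I ℝ) (s t : ℝ) :
    NormedSpace.exp ((s + t) • B) = NormedSpace.exp (s • B) * NormedSpace.exp (t • B) := by
  rw [add_smul]
  exact Matrix.exp_add_of_commute _ _ (((Commute.refl B).smul_left s).smul_right t)

theorem vanLoan_exp_smul_neg {I : Type*} [Fintype I] [DecidableEq I]
    (B : Matrix I I ℝ) (t : ℝ) :
    NormedSpace.exp (t • B) * NormedSpace.exp ((-t) • B) = 1 := by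
  rw [← vanLoan_exp_add_smul, add_neg_cancel, zero_smul, NormedSpace.exp_zero]

end aux

/-- Van Loan's theorem: the exponential of a block upper-triangular matrix
A = [[A₁₁, A₁₂],[0, A₂₂]] satisfies
exp(Ah) = [[exp(A₁₁h), Φ₁₂(h)],[0, exp(A₂₂h)]] with
Φ₁₂(h) = ∫₀^h exp(A₁₁(h-τ)) A₁₂ exp(A₂₂τ) dτ. -/
theorem vanLoan_block_exp {m n : ℕ} (A₁₁ : Matrix (Fin m) (Fin m) ℝ)
    (A₁₂ : Matrix (Fin m) (Fin n) ℝ) (A₂₂ : Matrix (Fin n) (Fin n) ℝ) (h : ℝ) :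
    NormedSpace.exp (h • Matrix.fromBlocks A₁₁ A₁₂ 0 A₂₂) =
      Matrix.fromBlocks (NormedSpace.exp (h • A₁₁))
        (∫ τ in (0:ℝ)..h, NormedSpace.exp ((h - τ) • A₁₁) * A₁₂ * NormedSpace.exp (τ • A₂₂))
        0 (NormedSpace.exp (h • A₂₂)) := by
  set A : Matrix (Fin m ⊕ Fin n) (Fin m ⊕ Fin n) ℝ := Matrix.fromBlocks A₁₁ A₁₂ 0 A₂₂ with hA
  set f : ℝ → Matrix (Fin m) (Fin n) ℝ :=
    fun τ => NormedSpace.exp ((-τ) • A₁₁) * A₁₂ * NormedSpace.exp (τ • A₂₂) with hf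
  set Ψ : ℝ → Matrix (Fin m) (Fin n) ℝ := fun t => ∫ τ in (0:ℝ)..t, f τ with hΨ
  set Φ : ℝ → Matrix (Fin m) (Fin n) ℝ := fun t => NormedSpace.exp (t • A₁₁) * Ψ t with hΦdef
  set R : ℝ → Matrix (Fin m ⊕ Fin n) (Fin m ⊕ Fin n) ℝ :=
    fun t => Matrix.fromBlocks (NormedSpace.exp (t • A₁₁)) (Φ t) 0
      (NormedSpace.exp (t • A₂₂)) with hR
  -- continuity of the integrand
  have hcont : Continuous f := by
    apply vanLoan_continuous_mul
    · apply vanLoan_continuous_mul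
      · exact NormedSpace.exp_continuous.comp ((continuous_id.neg).smul continuous_const)
      · exact continuous_const
    · exact NormedSpace.exp_continuous.comp (continuous_id.smul continuous_const)
  -- Step A: the integral in the statement is Φ h
  have hstep : (∫ τ in (0:ℝ)..h,
      NormedSpace.exp ((h - τ) • A₁₁) * A₁₂ * NormedSpace.exp (τ • A₂₂)) = Φ h := by
    have hpt : ∀ τ : ℝ, NormedSpace.exp ((h - τ) • A₁₁) * A₁₂ * NormedSpace.exp (τ • A₂₂)
        = NormedSpace.exp (h • A₁₁) * f τ := by
      intro τ
      simp only [hf]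
      rw [sub_eq_add_neg h τ, vanLoan_exp_add_smul]
      simp only [Matrix.mul_assoc]
    have hlin : IsBoundedLinearMap ℝ
        (fun Y : Matrix (Fin m) (Fin n) ℝ => NormedSpace.exp (h • A₁₁) * Y) :=
      { map_add := fun X Y => Matrix.mul_add _ X Y
        map_smul := fun c X => Matrix.mul_smul _ c X
        bound := ⟨‖NormedSpace.exp (h • A₁₁)‖ + 1, by positivity, fun X =>
          (Matrix.frobenius_norm_mul _ X).trans (by
            have : (0:ℝ) ≤ ‖X‖ := norm_nonneg X
            nlinarith [norm_nonneg (NormedSpace.exp (h • A₁₁))])⟩ }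
    simp_rw [hpt]
    have := hlin.toContinuousLinearMap.intervalIntegral_comp_comm
      (a := (0:ℝ)) (b := h) (μ := volume) (hcont.intervalIntegrable _ _)
    exact this
  -- derivatives of the pieces
  have dE₁ : ∀ t : ℝ, HasDerivAt (fun u : ℝ => NormedSpace.exp (u • A₁₁))
      (A₁₁ * NormedSpace.exp (t • A₁₁)) t := fun t => hasDerivAt_exp_smul_const' A₁₁ t
  have dE₂ : ∀ t : ℝ, HasDerivAt (fun u : ℝ => NormedSpace.exp (u • A₂₂))
      (A₂₂ * NormedSpace.exp (t • A₂₂)) t := fun t => hasDerivAt_exp_smul_const' A₂₂ t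
  have dΨ : ∀ t : ℝ, HasDerivAt Ψ (f t) t := fun t =>
    intervalIntegral.integral_hasDerivAt_right (hcont.intervalIntegrable _ _)
      (by
        haveI : TopologicalSpace.PseudoMetrizableSpace (Matrix (Fin m) (Fin n) ℝ) :=
          inferInstanceAs (TopologicalSpace.PseudoMetrizableSpace (Fin m → Fin n → ℝ))
        exact hcont.stronglyMeasurable.stronglyMeasurableAtFilter) hcont.continuousAt
  have dΦ : ∀ t : ℝ, HasDerivAt Φ
      (A₁₁ * Φ t + A₁₂ * NormedSpace.exp (t • A₂₂)) t := by
    intro t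
    have h1 := vanLoan_hasDerivAt_mul (dE₁ t) (dΨ t)
    have h2 : A₁₁ * NormedSpace.exp (t • A₁₁) * Ψ t + NormedSpace.exp (t • A₁₁) * f t
        = A₁₁ * Φ t + A₁₂ * NormedSpace.exp (t • A₂₂) := by
      rw [hΦdef]
      congr 1
      · rw [Matrix.mul_assoc]
      · rw [hf, ← Matrix.mul_assoc, ← Matrix.mul_assoc, vanLoan_exp_smul_neg, Matrix.one_mul]
    rwa [h2] at h1
  have dR : ∀ t : ℝ, HasDerivAt R (A * R t) t := by
    intro t
    have h1 := vanLoan_hasDerivAt_fromBlocks (dE₁ t) (dΦ t) (dE₂ t)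
    have h2 : Matrix.fromBlocks (A₁₁ * NormedSpace.exp (t • A₁₁))
        (A₁₁ * Φ t + A₁₂ * NormedSpace.exp (t • A₂₂)) 0
        (A₂₂ * NormedSpace.exp (t • A₂₂)) = A * R t := by
      rw [hA, hR, Matrix.fromBlocks_multiply]
      simp
    rwa [h2] at h1
  -- the function exp(-t A) * R t has zero derivative
  have dEA : ∀ t : ℝ, HasDerivAt (fun u : ℝ => NormedSpace.exp ((-u) • A))
      (-(A * NormedSpace.exp ((-t) • A))) t := by
    intro t
    have h1 := (hasDerivAt_exp_smul_const' A (-t)).scomp t (hasDerivAt_neg t)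
    simp [Function.comp_def] at h1
    simp only [neg_smul]
    exact h1
  have dG : ∀ t : ℝ, HasDerivAt (fun u : ℝ => NormedSpace.exp ((-u) • A) * R u) 0 t := by
    intro t
    have h1 := vanLoan_hasDerivAt_mul (dEA t) (dR t)
    have hc : Commute A (NormedSpace.exp ((-t) • A)) :=
      (((Commute.refl A).smul_right (-t)).exp_right)
    have h2 : -(A * NormedSpace.exp ((-t) • A)) * R t
        + NormedSpace.exp ((-t) • A) * (A * R t) = 0 := by
      rw [← Matrix.mul_assoc, ← hc.eq, Matrix.neg_mul, neg_add_cancel]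
    rwa [h2] at h1
  have hconst : NormedSpace.exp ((-h) • A) * R h = NormedSpace.exp ((-(0:ℝ)) • A) * R 0 :=
    is_const_of_deriv_eq_zero (fun s => (dG s).differentiableAt) (fun s => (dG s).deriv) h 0
  have hR0 : NormedSpace.exp ((-(0:ℝ)) • A) * R 0 = 1 := by
    rw [hR]
    simp only [neg_zero, zero_smul, NormedSpace.exp_zero, Matrix.one_mul]
    have hΦ0 : Φ 0 = 0 := by
      rw [hΦdef]
      simp [hΨ, intervalIntegral.integral_same]
    rw [hΦ0, ← Matrix.fromBlocks_one]
  have hinv : NormedSpace.exp ((-h) • A) * R h = 1 := hconst.trans hR0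
  have final : NormedSpace.exp (h • A) = R h := by
    calc NormedSpace.exp (h • A)
        = NormedSpace.exp (h • A) * (NormedSpace.exp ((-h) • A) * R h) := by
          rw [hinv, Matrix.mul_one]
      _ = NormedSpace.exp (h • A) * NormedSpace.exp ((-h) • A) * R h := by
          rw [Matrix.mul_assoc]
      _ = R h := by rw [vanLoan_exp_smul_neg, Matrix.one_mul]
  rw [hstep]
  exact final
end

section
/- Let A_IOUP be the d(q+1) × d(q+1) block companion matrix whose (i, i+1) blocks are I_d for i = 0,…,q-1, whose (q,q) block is L, and all other blocks zero. Then exp(A_IOUP h) = [[exp(A_IWP h), Φ₁₂(h)],[0, exp(Lh)]], where A_IWP is the dq × dq nilpotent shift matrix (blocks I_d on the superdiagonal) and Φ₁₂(h) is the dq × d block column vector whose i-th d×d block (i = 0,…,q-1) equals h^{q-i} φ_{q-i}(Lh). -/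
open MeasureTheory Matrix
attribute [local instance] Matrix.frobeniusNormedAddCommGroup Matrix.frobeniusNormedSpace

/-- The φ-functions of exponential integrators for square matrices: φ₀ = exp, and
φ_k(M) = ∫₀¹ exp(M(1-τ)) τ^{k-1}/(k-1)! dτ for k ≥ 1. -/
noncomputable def phiM {d : ℕ} (k : ℕ) (M : Matrix (Fin d) (Fin d) ℝ) : Matrix (Fin d) (Fin d) ℝ :=
  if k = 0 then NormedSpace.exp M
  else ∫ τ in (0:ℝ)..1, (τ ^ (k - 1) / (Nat.factorial (k - 1) : ℝ)) • NormedSpace.exp ((1 - τ) • M)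

/-- The dq × dq drift matrix of the (q-1)-times integrated Wiener process:
the nilpotent block shift matrix with I_d blocks on the superdiagonal. -/
def A_IWP (d q : ℕ) : Matrix (Fin q × Fin d) (Fin q × Fin d) ℝ := fun i j =>
  if (j.1 : ℕ) = (i.1 : ℕ) + 1 ∧ i.2 = j.2 then 1 else 0

/-- The dq × d block column with I_d in the last block and zeros elsewhere. -/
def E_last (d q : ℕ) : Matrix (Fin q × Fin d) (Fin d) ℝ := fun i b =>
  if (i.1 : ℕ) = q - 1 ∧ i.2 = b then 1 else 0

/-- The d(q+1) × d(q+1) drift matrix of the q-times integrated Ornstein–Uhlenbeck process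
with rate matrix L: blocks (i,i+1) are I_d for i = 0,…,q-1, block (q,q) is L, rest zero. -/
def A_IOUP (d q : ℕ) (L : Matrix (Fin d) (Fin d) ℝ) :
    Matrix ((Fin q × Fin d) ⊕ Fin d) ((Fin q × Fin d) ⊕ Fin d) ℝ :=
  Matrix.fromBlocks (A_IWP d q) (E_last d q) 0 L

attribute [local instance] Matrix.frobeniusNormedRing Matrix.frobeniusNormedAlgebra

section Aux

lemma matrix_tsum_apply {m : Type*} [Fintype m] [DecidableEq m]
    {n : Type*} [Fintype n] (f : ℕ → Matrix m n ℝ) (hs : Summable f) (i : m) (j : n) :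
    (∑' k : ℕ, f k) i j = ∑' k : ℕ, f k i j := by
  let e : Matrix m n ℝ →ₗ[ℝ] ℝ :=
    { toFun := fun A => A i j, map_add' := fun _ _ => rfl, map_smul' := fun _ _ => rfl }
  exact (e.toContinuousLinearMap).map_tsum hs

lemma exp_apply' {m : Type*} [Fintype m] [DecidableEq m] (M : Matrix m m ℝ) (i j : m) :
    NormedSpace.exp M i j = ∑' n : ℕ, ((Nat.factorial n : ℝ))⁻¹ * (M ^ n) i j := by
  letI : CompleteSpace (Matrix m m ℝ) := FiniteDimensional.complete ℝ _
  rw [NormedSpace.exp_eq_tsum (𝕂 := ℝ)]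
  exact matrix_tsum_apply (fun n : ℕ => ((Nat.factorial n : ℝ))⁻¹ • M ^ n)
    (NormedSpace.expSeries_summable' M) i j

lemma pow_mul_E (d q j : ℕ) (i : Fin q × Fin d) (b : Fin d) :
    (A_IWP d q ^ j * E_last d q) i b =
      if (i.1 : ℕ) + j = q - 1 ∧ i.2 = b then 1 else 0 := by
  induction j generalizing i b with
  | zero => simp [E_last]
  | succ j ih =>
    rw [pow_succ', Matrix.mul_assoc, Matrix.mul_apply]
    rcases lt_or_ge ((i.1 : ℕ) + 1) q with hlt | hge
    · rw [Finset.sum_eq_single ((Fin.mk ((i.1 : ℕ) + 1) hlt, i.2) : Fin q × Fin d)]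
      · rw [ih]
        have h1 : A_IWP d q i (Fin.mk ((i.1 : ℕ) + 1) hlt, i.2) = 1 := by simp [A_IWP]
        rw [h1, one_mul]
        show (if (i.1 : ℕ) + 1 + j = q - 1 ∧ i.2 = b then (1:ℝ) else 0) = _
        congr 1
        rw [eq_iff_iff]
        constructor <;> (rintro ⟨h1, h2⟩; exact ⟨by omega, h2⟩)
      · intro k _ hk
        rw [A_IWP]
        by_cases hc : (k.1 : ℕ) = (i.1 : ℕ) + 1 ∧ i.2 = k.2
        · exact absurd (by ext <;> simp [hc.1, ← hc.2]) hk
        · simp [hc]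
      · intro hmem; exact absurd (Finset.mem_univ _) hmem
    · have hz : ∀ k : Fin q × Fin d, A_IWP d q i k * (A_IWP d q ^ j * E_last d q) k b = 0 := by
        intro k
        have : ¬((k.1 : ℕ) = (i.1 : ℕ) + 1 ∧ i.2 = k.2) := fun hc => by omega
        simp [A_IWP, this]
      rw [Finset.sum_eq_zero fun k _ => hz k]
      have : ¬((i.1 : ℕ) + (j + 1) = q - 1 ∧ i.2 = b) := by
        rintro ⟨h1, -⟩; omega
      simp [this]

lemma block_pow {d q : ℕ} (N : Matrix (Fin q × Fin d) (Fin q × Fin d) ℝ)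
    (E : Matrix (Fin q × Fin d) (Fin d) ℝ) (L : Matrix (Fin d) (Fin d) ℝ) (n : ℕ) :
    (Matrix.fromBlocks N E 0 L) ^ n =
      Matrix.fromBlocks (N ^ n)
        (∑ j ∈ Finset.range n, N ^ j * E * L ^ (n - 1 - j)) 0 (L ^ n) := by
  induction n with
  | zero => simp [Matrix.fromBlocks_one]
  | succ n ih =>
    have htr : N * ∑ j ∈ Finset.range n, N ^ j * E * L ^ (n - 1 - j) + E * L ^ n
        = ∑ j ∈ Finset.range (n + 1), N ^ j * E * L ^ (n + 1 - 1 - j) := by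
      rw [Finset.sum_range_succ', Matrix.mul_sum]
      simp only [pow_zero, Matrix.one_mul, Nat.add_sub_cancel, Nat.sub_zero]
      congr 1
      refine Finset.sum_congr rfl fun j hj => ?_
      have hx : n - 1 - j = n - (j + 1) := by omega
      rw [pow_succ', Matrix.mul_assoc, Matrix.mul_assoc, hx, Matrix.mul_assoc]
    rw [pow_succ', ih, Matrix.fromBlocks_multiply]
    simp only [Matrix.mul_zero, Matrix.zero_mul, add_zero, zero_add, ← pow_succ']
    rw [htr]

lemma prod_fact (k m : ℕ) (hk : 1 ≤ k) :
    (∏ j ∈ Finset.range (m + 1), (k + j)) * Nat.factorial (k - 1)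
      = Nat.factorial (k + m) := by
  induction m with
  | zero =>
    simp only [Finset.range_one, Finset.prod_singleton, Nat.add_zero]
    have hke : k = (k - 1) + 1 := by omega
    rw [hke, Nat.add_sub_cancel, Nat.factorial_succ]
    simp
  | succ m ih =>
    rw [Finset.prod_range_succ, mul_right_comm, ih, ← Nat.add_assoc, Nat.factorial_succ,
      Nat.mul_comm]

lemma beta_nat (k m : ℕ) (hk : 1 ≤ k) :
    ∫ x in (0:ℝ)..1, x ^ (k - 1) * (1 - x) ^ m =
      (Nat.factorial (k - 1) : ℝ) * Nat.factorial m / Nat.factorial (k + m) := by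
  have hu : 0 < Complex.re (k : ℂ) := by
    simp only [Complex.natCast_re]; exact_mod_cast hk
  have h1 := Complex.betaIntegral_eval_nat_add_one_right hu m
  have h2 : Complex.betaIntegral (k : ℂ) ((m : ℂ) + 1) =
      ((∫ x in (0:ℝ)..1, x ^ (k - 1) * (1 - x) ^ m : ℝ) : ℂ) := by
    rw [Complex.betaIntegral, ← intervalIntegral.integral_ofReal]
    refine intervalIntegral.integral_congr fun x _ => ?_
    have e1 : (k : ℂ) - 1 = ((k - 1 : ℕ) : ℂ) := by push_cast [Nat.cast_sub hk]; ring
    have e2 : (m : ℂ) + 1 - 1 = ((m : ℕ) : ℂ) := by ring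
    rw [e1, e2, Complex.cpow_natCast, Complex.cpow_natCast]
    push_cast
    ring
  have h3 : (∏ j ∈ Finset.range (m + 1), ((k : ℂ) + j)) * (Nat.factorial (k - 1) : ℂ)
      = (Nat.factorial (k + m) : ℂ) := by
    have := prod_fact k m hk
    exact_mod_cast congrArg (fun x : ℕ => (x : ℂ)) this
  rw [h2] at h1
  have hf1 : (Nat.factorial (k + m) : ℂ) ≠ 0 := by
    exact_mod_cast Nat.cast_ne_zero.mpr (Nat.factorial_ne_zero _)
  have hf2 : (Nat.factorial (k - 1) : ℂ) ≠ 0 := by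
    exact_mod_cast Nat.cast_ne_zero.mpr (Nat.factorial_ne_zero _)
  have hprod : (∏ j ∈ Finset.range (m + 1), ((k : ℂ) + j)) ≠ 0 := by
    intro h0
    rw [h0, zero_mul] at h3
    exact hf1 h3.symm
  have key : ((∫ x in (0:ℝ)..1, x ^ (k - 1) * (1 - x) ^ m : ℝ) : ℂ)
      = ((Nat.factorial (k - 1) : ℝ) * Nat.factorial m / Nat.factorial (k + m) : ℝ) := by
    rw [h1]
    push_cast
    field_simp
    rw [mul_comm ((Nat.factorial m : ℂ)) _, ← h3]
    ring
  exact_mod_cast key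

lemma phi_series {d : ℕ} (k : ℕ) (hk : 1 ≤ k) (M : Matrix (Fin d) (Fin d) ℝ) :
    phiM k M = ∑' m : ℕ, ((Nat.factorial (m + k) : ℝ))⁻¹ • M ^ m := by
  letI : CompleteSpace (Matrix (Fin d) (Fin d) ℝ) := FiniteDimensional.complete ℝ _
  have hk0 : k ≠ 0 := by omega
  rw [phiM, if_neg hk0]
  set g : ℕ → ℝ → Matrix (Fin d) (Fin d) ℝ := fun m τ =>
    (τ ^ (k - 1) / (Nat.factorial (k - 1) : ℝ) * ((1 - τ) ^ m * ((Nat.factorial m : ℝ))⁻¹)) • M ^ m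
    with hg
  have hintegrand : ∀ τ : ℝ,
      (τ ^ (k - 1) / (Nat.factorial (k - 1) : ℝ)) • NormedSpace.exp ((1 - τ) • M)
        = ∑' m : ℕ, g m τ := by
    intro τ
    have hsum : Summable fun m : ℕ => ((Nat.factorial m : ℝ))⁻¹ • ((1 - τ) • M) ^ m :=
      NormedSpace.expSeries_summable' ((1 - τ) • M)
    rw [NormedSpace.exp_eq_tsum (𝕂 := ℝ)]
    have hmap := (((τ ^ (k - 1) / (Nat.factorial (k - 1) : ℝ)) •
      (ContinuousLinearMap.id ℝ (Matrix (Fin d) (Fin d) ℝ)))).map_tsum hsum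
    simp only [ContinuousLinearMap.smul_apply, ContinuousLinearMap.id_apply] at hmap
    rw [hmap]
    congr 1
    funext m
    rw [hg]
    simp only [smul_pow, smul_smul]
    ring_nf
  rw [intervalIntegral.integral_of_le (by norm_num : (0:ℝ) ≤ 1)]
  calc ∫ τ in Set.Ioc (0:ℝ) 1,
        (τ ^ (k - 1) / (Nat.factorial (k - 1) : ℝ)) • NormedSpace.exp ((1 - τ) • M)
      = ∫ τ in Set.Ioc (0:ℝ) 1, ∑' m : ℕ, g m τ := by
        refine integral_congr_ae (Filter.Eventually.of_forall fun τ => hintegrand τ)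
    _ = ∑' m : ℕ, ∫ τ in Set.Ioc (0:ℝ) 1, g m τ := by
        refine integral_tsum (fun m => ?_) ?_
        · exact ((Continuous.smul (f := fun τ : ℝ => τ ^ (k - 1) / (Nat.factorial (k - 1) : ℝ) *
            ((1 - τ) ^ m * ((Nat.factorial m : ℝ))⁻¹)) (by fun_prop) continuous_const)).aestronglyMeasurable
        · have hbd : ∀ m : ℕ, ∫⁻ τ in Set.Ioc (0:ℝ) 1, ‖g m τ‖₊ ∂volume
              ≤ (‖((Nat.factorial m : ℝ))⁻¹ • M ^ m‖₊ : ENNReal) := by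
            intro m
            have hle : ∀ τ ∈ Set.Ioc (0:ℝ) 1,
                (‖g m τ‖₊ : ENNReal) ≤ (‖((Nat.factorial m : ℝ))⁻¹ • M ^ m‖₊ : ENNReal) := by
              intro τ hτ
              rw [ENNReal.coe_le_coe, ← NNReal.coe_le_coe, coe_nnnorm, coe_nnnorm, hg]
              rw [norm_smul, norm_smul]
              have h1 : 0 ≤ τ := le_of_lt hτ.1
              have h2 : τ ≤ 1 := hτ.2
              have h3 : (0:ℝ) ≤ 1 - τ := by linarith
              have h4 : 1 - τ ≤ 1 := by linarith
              have hp1 : τ ^ (k-1) ≤ 1 := pow_le_one₀ h1 h2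
              have hp2 : (1-τ) ^ m ≤ 1 := pow_le_one₀ h3 h4
              have hf1 : (1:ℝ) ≤ (Nat.factorial (k-1) : ℝ) := by
                exact_mod_cast Nat.one_le_iff_ne_zero.mpr (Nat.factorial_ne_zero _)
              gcongr
              rw [Real.norm_eq_abs, abs_of_nonneg (by positivity), Real.norm_eq_abs,
                abs_of_nonneg (by positivity)]
              calc τ ^ (k-1) / (Nat.factorial (k-1) : ℝ) * ((1-τ)^m * ((Nat.factorial m : ℝ))⁻¹)
                  ≤ 1 / 1 * (1 * ((Nat.factorial m : ℝ))⁻¹) := by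
                    gcongr <;> positivity
                _ = ((Nat.factorial m : ℝ))⁻¹ := by ring
            calc ∫⁻ τ in Set.Ioc (0:ℝ) 1, ‖g m τ‖₊ ∂volume
                ≤ ∫⁻ _ in Set.Ioc (0:ℝ) 1,
                    (‖((Nat.factorial m : ℝ))⁻¹ • M ^ m‖₊ : ENNReal) ∂volume := by
                  refine setLIntegral_mono measurable_const hle
              _ = (‖((Nat.factorial m : ℝ))⁻¹ • M ^ m‖₊ : ENNReal) := by
                  rw [setLIntegral_const]
                  simp [Real.volume_Ioc]
          refine ne_of_lt (lt_of_le_of_lt (ENNReal.tsum_le_tsum hbd) ?_)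
          have hsummable : Summable fun m : ℕ => ‖((Nat.factorial m : ℝ))⁻¹ • M ^ m‖₊ := by
            rw [← NNReal.summable_coe]
            simpa [coe_nnnorm] using NormedSpace.norm_expSeries_summable' (𝕂 := ℝ) M
          exact lt_of_le_of_ne le_top (ENNReal.tsum_coe_ne_top_iff_summable.mpr hsummable)
    _ = ∑' m : ℕ, ((Nat.factorial (m + k) : ℝ))⁻¹ • M ^ m := by
        congr 1
        funext m
        rw [hg]
        simp only
        rw [integral_smul_const (μ := volume.restrict (Set.Ioc (0:ℝ) 1))
          (f := fun τ => τ ^ (k - 1) / (Nat.factorial (k - 1) : ℝ) *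
            ((1 - τ) ^ m * ((Nat.factorial m : ℝ))⁻¹))]
        congr 1
        rw [← intervalIntegral.integral_of_le (by norm_num : (0:ℝ) ≤ 1)]
        have hcong : ∀ τ : ℝ, τ ^ (k - 1) / (Nat.factorial (k - 1) : ℝ) *
            ((1 - τ) ^ m * ((Nat.factorial m : ℝ))⁻¹)
            = ((Nat.factorial (k-1) : ℝ))⁻¹ * ((Nat.factorial m : ℝ))⁻¹ *
              (τ ^ (k-1) * (1 - τ) ^ m) := fun τ => by ring
        rw [intervalIntegral.integral_congr fun τ _ => hcong τ,
          intervalIntegral.integral_const_mul, beta_nat k m hk]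
        have hf1 : (Nat.factorial (k-1) : ℝ) ≠ 0 := by
          exact_mod_cast Nat.factorial_ne_zero _
        have hf2 : (Nat.factorial m : ℝ) ≠ 0 := by
          exact_mod_cast Nat.factorial_ne_zero _
        have hf3 : (Nat.factorial (m+k) : ℝ) ≠ 0 := by
          exact_mod_cast Nat.factorial_ne_zero _
        have hmk : k + m = m + k := by omega
        rw [hmk]
        field_simp

end Aux

/-- Proposition 1: the transition matrix of the q-times IOUP is
exp(A_IOUP h) = [[exp(A_IWP h), Φ₁₂(h)],[0, exp(Lh)]], where the i-th d×d block of Φ₁₂(h)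
is h^{q-i} φ_{q-i}(Lh). -/
theorem ioup_transition_matrix {d q : ℕ} (hq : 1 ≤ q) (L : Matrix (Fin d) (Fin d) ℝ)
    (h : ℝ) (hh : 0 < h) :
    NormedSpace.exp (h • A_IOUP d q L) =
      Matrix.fromBlocks (NormedSpace.exp (h • A_IWP d q))
        (fun i b => (h ^ (q - (i.1 : ℕ)) • phiM (q - (i.1 : ℕ)) (h • L)) i.2 b)
        0 (NormedSpace.exp (h • L)) := by
  have hpow : ∀ n : ℕ, (h • A_IOUP d q L) ^ n =
      Matrix.fromBlocks (h ^ n • A_IWP d q ^ n)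
        (h ^ n • ∑ j ∈ Finset.range n, A_IWP d q ^ j * E_last d q * L ^ (n - 1 - j))
        0 (h ^ n • L ^ n) := by
    intro n
    rw [smul_pow, A_IOUP, block_pow, Matrix.fromBlocks_smul, smul_zero]
  ext i j
  rcases i with i | i <;> rcases j with j | j
  · -- top-left block
    erw [Matrix.fromBlocks_apply₁₁, exp_apply', exp_apply']
    refine tsum_congr fun n => ?_
    rw [hpow n, Matrix.fromBlocks_apply₁₁, smul_pow]
  · -- top-right block
    erw [Matrix.fromBlocks_apply₁₂, exp_apply']
    set k : ℕ := q - (i.1 : ℕ) with hkdef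
    have hik : (i.1 : ℕ) < q := i.1.isLt
    have hk1 : 1 ≤ k := by omega
    -- entry of the sum S n
    have hS : ∀ n : ℕ,
        (∑ j' ∈ Finset.range n, A_IWP d q ^ j' * E_last d q * L ^ (n - 1 - j')) i j
          = if k ≤ n then (L ^ (n - k)) i.2 j else 0 := by
      intro n
      have hterm : ∀ j' : ℕ, (A_IWP d q ^ j' * E_last d q * L ^ (n - 1 - j')) i j
          = if j' = q - 1 - (i.1 : ℕ) then (L ^ (n - 1 - j')) i.2 j else 0 := by
        intro j'
        rw [Matrix.mul_apply]
        by_cases hc : j' = q - 1 - (i.1 : ℕ)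
        · rw [if_pos hc]
          rw [Finset.sum_eq_single i.2]
          · rw [pow_mul_E]
            have : (i.1 : ℕ) + j' = q - 1 ∧ i.2 = i.2 := ⟨by omega, rfl⟩
            rw [if_pos this, one_mul]
          · intro c _ hc2
            rw [pow_mul_E]
            have : ¬((i.1 : ℕ) + j' = q - 1 ∧ i.2 = c) := fun hx => hc2 hx.2.symm
            rw [if_neg this, zero_mul]
          · intro hmem; exact absurd (Finset.mem_univ _) hmem
        · rw [if_neg hc]
          refine Finset.sum_eq_zero fun c _ => ?_
          rw [pow_mul_E]
          have : ¬((i.1 : ℕ) + j' = q - 1 ∧ i.2 = c) := fun hx => hc (by omega)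
          rw [if_neg this, zero_mul]
      rw [Matrix.sum_apply, Finset.sum_congr rfl fun j' _ => hterm j', Finset.sum_ite_eq' (Finset.range n)]
      by_cases hcn : q - 1 - (i.1 : ℕ) ∈ Finset.range n
      · rw [if_pos hcn]
        rw [Finset.mem_range] at hcn
        have hkn : k ≤ n := by omega
        rw [if_pos hkn]
        have hee : n - 1 - (q - 1 - (i.1 : ℕ)) = n - k := by omega
        rw [hee]
      · rw [if_neg hcn]
        rw [Finset.mem_range] at hcn
        have hkn : ¬ k ≤ n := by omega
        rw [if_neg hkn]
    -- RHS
    have hexp : ∀ n : ℕ, ((h • A_IOUP d q L) ^ n) (Sum.inl i) (Sum.inr j)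
        = h ^ n * (if k ≤ n then (L ^ (n - k)) i.2 j else 0) := by
      intro n
      rw [hpow n, Matrix.fromBlocks_apply₁₂, Matrix.smul_apply, hS n, smul_eq_mul]
    have hLsum : Summable fun m : ℕ => ((Nat.factorial (m + k) : ℝ))⁻¹ • (h • L) ^ m := by
      letI : CompleteSpace (Matrix (Fin d) (Fin d) ℝ) := FiniteDimensional.complete ℝ _
      refine Summable.of_norm_bounded
        (NormedSpace.norm_expSeries_summable' (𝕂 := ℝ) (h • L)) fun m => ?_
      rw [norm_smul, norm_smul, Real.norm_eq_abs, Real.norm_eq_abs, abs_inv,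
        abs_of_nonneg (by positivity), abs_inv, abs_of_nonneg (by positivity)]
      have : (Nat.factorial m : ℝ) ≤ (Nat.factorial (m + k) : ℝ) := by
        exact_mod_cast Nat.factorial_le (by omega)
      gcongr
    rw [Matrix.smul_apply, smul_eq_mul, phi_series k hk1 (h • L),
      matrix_tsum_apply _ hLsum i.2 j]
    -- reindex the LHS tsum
    have hinj : Function.Injective (fun m : ℕ => m + k) := by
      intro a b hab
      simpa using hab
    rw [← Function.Injective.tsum_eq hinj (f := fun n : ℕ =>
      ((Nat.factorial n : ℝ))⁻¹ * ((h • A_IOUP d q L) ^ n) (Sum.inl i) (Sum.inr j)) ?_]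
    · rw [← tsum_mul_left]
      refine tsum_congr fun m => ?_
      show ((Nat.factorial (m + k) : ℝ))⁻¹ * _ = _
      rw [hexp (m + k)]
      have hkm : k ≤ m + k := by omega
      rw [if_pos hkm]
      have hmk2 : m + k - k = m := by omega
      rw [hmk2, Matrix.smul_apply, smul_pow, Matrix.smul_apply, smul_eq_mul, smul_eq_mul, pow_add]
      try ring
    · intro n hn
      simp only [Function.mem_support, ne_eq] at hn
      by_contra hxr
      have hnk : ¬ k ≤ n := by
        intro hkn
        exact hxr ⟨n - k, by show n - k + k = n; omega⟩
      apply hn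
      rw [hexp n, if_neg hnk, mul_zero, mul_zero]
  · -- bottom-left block
    erw [Matrix.fromBlocks_apply₂₁, exp_apply']
    simp only [hpow, Matrix.fromBlocks_apply₂₁]
    simp
  · -- bottom-right block
    erw [Matrix.fromBlocks_apply₂₂, exp_apply', exp_apply']
    refine tsum_congr fun n => ?_
    rw [hpow n, Matrix.fromBlocks_apply₂₂, smul_pow]
end

section
/- Let Q(h) = ∫₀^h [[τ² φ₁(Lτ)φ₁(Lτ)ᵀ, τ φ₁(Lτ) exp(Lτ)ᵀ],[τ exp(Lτ) φ₁(Lτ)ᵀ, exp(Lτ)exp(Lτ)ᵀ]] dτ be the process noise covariance of the once-integrated Ornstein–Uhlenbeck process with rate L, and H = [-L, I]. Then Q(h) Hᵀ = [h² φ₂(Lh); h φ₁(Lh)] (block column). -/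
open MeasureTheory Matrix
attribute [local instance] Matrix.frobeniusNormedAddCommGroup Matrix.frobeniusNormedSpace

/-- The process noise covariance of the once-integrated Ornstein–Uhlenbeck process with
rate L, written blockwise via the φ-functions. -/
noncomputable def Qioup {d : ℕ} (L : Matrix (Fin d) (Fin d) ℝ) (h : ℝ) :
    Matrix (Fin d ⊕ Fin d) (Fin d ⊕ Fin d) ℝ :=
  ∫ τ in (0:ℝ)..h, Matrix.fromBlocks
    (τ ^ 2 • (phiM 1 (τ • L) * (phiM 1 (τ • L))ᵀ))
    (τ • (phiM 1 (τ • L) * (NormedSpace.exp (τ • L))ᵀ))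
    (τ • (NormedSpace.exp (τ • L) * (phiM 1 (τ • L))ᵀ))
    (NormedSpace.exp (τ • L) * (NormedSpace.exp (τ • L))ᵀ)

attribute [local instance] Matrix.frobeniusNormedRing Matrix.frobeniusNormedAlgebra

/-- The enorm of the Frobenius norm, over the product topology of matrices. -/
noncomputable def frobENorm {m n : Type*} [Fintype m] [Fintype n] :
    ENormedAddCommMonoid (Matrix m n ℝ) := by
  exact (NormedAddCommGroup.toENormedAddCommMonoid : ENormedAddCommMonoid (Matrix m n ℝ))

attribute [local instance] frobENorm

section Aux

variable {d : ℕ}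

/-- `Ee L t = exp (t • L)`. -/
noncomputable def Ee (L : Matrix (Fin d) (Fin d) ℝ) (t : ℝ) : Matrix (Fin d) (Fin d) ℝ :=
  NormedSpace.exp (t • L)

/-- `Ff L t = ∫₀ᵗ exp (u • L) du`. -/
noncomputable def Ff (L : Matrix (Fin d) (Fin d) ℝ) (t : ℝ) : Matrix (Fin d) (Fin d) ℝ :=
  ∫ u in (0:ℝ)..t, Ee L u

lemma contE (L : Matrix (Fin d) (Fin d) ℝ) : Continuous (Ee L) :=
  NormedSpace.exp_continuous.comp (continuous_id.smul continuous_const)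

lemma intE (L : Matrix (Fin d) (Fin d) ℝ) (a b : ℝ) : IntervalIntegrable (Ee L) volume a b :=
  (contE L).intervalIntegrable _ _

lemma contF (L : Matrix (Fin d) (Fin d) ℝ) : Continuous (Ff L) :=
  intervalIntegral.continuous_primitive (intE L) 0

lemma hasDerivAt_F (L : Matrix (Fin d) (Fin d) ℝ) (t : ℝ) : HasDerivAt (Ff L) (Ee L t) t :=
  ((contE L).integral_hasStrictDerivAt 0 t).hasDerivAt

lemma hasDerivAt_E (L : Matrix (Fin d) (Fin d) ℝ) (t : ℝ) :
    HasDerivAt (Ee L) (L * Ee L t) t :=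
  hasDerivAt_exp_smul_const' L t

lemma intLE (L : Matrix (Fin d) (Fin d) ℝ) (a b : ℝ) :
    IntervalIntegrable (fun u => L * Ee L u) volume a b :=
  (continuous_const.mul (contE L)).intervalIntegrable _ _

lemma keyId (L : Matrix (Fin d) (Fin d) ℝ) (t : ℝ) : L * Ff L t = Ee L t - 1 := by
  have hmul : (ContinuousLinearMap.mul ℝ (Matrix (Fin d) (Fin d) ℝ) L) (Ff L t)
      = ∫ u in (0:ℝ)..t, (ContinuousLinearMap.mul ℝ (Matrix (Fin d) (Fin d) ℝ) L) (Ee L u) :=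
    ((ContinuousLinearMap.mul ℝ _ L).intervalIntegral_comp_comm (intE L 0 t)).symm
  simp only [ContinuousLinearMap.mul_apply'] at hmul
  have hftc : (∫ u in (0:ℝ)..t, L * Ee L u) = Ee L t - Ee L 0 :=
    intervalIntegral.integral_eq_sub_of_hasDerivAt (fun u _ => hasDerivAt_E L u)
      (intLE L 0 t)
  have h0 : Ee L 0 = 1 := by simp [Ee, NormedSpace.exp_zero]
  rw [show L * Ff L t = _ from hmul, hftc, h0]

lemma phi1_eq (L : Matrix (Fin d) (Fin d) ℝ) (t : ℝ) : t • phiM 1 (t • L) = Ff L t := by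
  have h1 : phiM 1 (t • L) = ∫ τ in (0:ℝ)..1, Ee L ((1 - τ) * t) := by
    simp only [phiM, if_neg one_ne_zero]
    congr 1
    funext τ
    simp [Ee, smul_smul, mul_comm]
  have h2 : (∫ τ in (0:ℝ)..1, Ee L ((1 - τ) * t)) = ∫ τ in (0:ℝ)..1, Ee L (τ * t) := by
    have := intervalIntegral.integral_comp_sub_left (a := (0:ℝ)) (b := 1)
      (fun σ => Ee L (σ * t)) 1
    simpa using this
  have h3 : t • (∫ τ in (0:ℝ)..1, Ee L (t * τ)) = ∫ u in (0:ℝ)..t, Ee L u := by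
    simpa using intervalIntegral.smul_integral_comp_mul_left (a := (0:ℝ)) (b := 1) (Ee L) t
  rw [h1, h2]
  rw [show (∫ τ in (0:ℝ)..1, Ee L (τ * t)) = ∫ τ in (0:ℝ)..1, Ee L (t * τ) by
    simp_rw [mul_comm]]
  rw [h3]; rfl

lemma phi2_eq (L : Matrix (Fin d) (Fin d) ℝ) (h : ℝ) (hh : h ≠ 0) :
    h ^ 2 • phiM 2 (h • L) = ∫ u in (0:ℝ)..h, (h - u) • Ee L u := by
  have h1 : phiM 2 (h • L) = ∫ τ in (0:ℝ)..1, τ • Ee L ((1 - τ) * h) := by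
    simp only [phiM, if_neg (by norm_num : (2:ℕ) ≠ 0)]
    congr 1
    funext τ
    simp [Ee, smul_smul, mul_comm]
  have h2 : (∫ τ in (0:ℝ)..1, τ • Ee L ((1 - τ) * h))
      = ∫ σ in (0:ℝ)..1, (1 - σ) • Ee L (σ * h) := by
    have := intervalIntegral.integral_comp_sub_left (a := (0:ℝ)) (b := 1)
      (fun σ => (1 - σ) • Ee L (σ * h)) 1
    simp only [sub_zero, sub_self, sub_sub_cancel] at this
    rw [← this]
  have h3 : h • (∫ σ in (0:ℝ)..1, (1 - h * σ / h) • Ee L (h * σ))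
      = ∫ u in (0:ℝ)..h, (1 - u / h) • Ee L u := by
    simpa using intervalIntegral.smul_integral_comp_mul_left (a := (0:ℝ)) (b := 1)
      (fun u => (1 - u / h) • Ee L u) h
  have h4 : (∫ σ in (0:ℝ)..1, (1 - σ) • Ee L (σ * h))
      = ∫ σ in (0:ℝ)..1, (1 - h * σ / h) • Ee L (h * σ) := by
    congr 1; funext σ
    rw [mul_comm σ h, mul_div_cancel_left₀ σ hh]
  have h5 : h • (∫ u in (0:ℝ)..h, (1 - u / h) • Ee L u)
      = ∫ u in (0:ℝ)..h, (h - u) • Ee L u := by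
    rw [← intervalIntegral.integral_smul]
    congr 1; funext u
    rw [smul_smul]
    congr 1
    field_simp
  rw [h1, h2, h4, sq, ← smul_smul, h3, h5]

lemma intFF (L : Matrix (Fin d) (Fin d) ℝ) (h : ℝ) :
    (∫ τ in (0:ℝ)..h, Ff L τ) = ∫ u in (0:ℝ)..h, (h - u) • Ee L u := by
  set G := fun t : ℝ => ∫ u in (0:ℝ)..t, u • Ee L u with hG
  have contuE : Continuous fun u : ℝ => u • Ee L u := continuous_id.smul (contE L)
  have hD : ∀ t : ℝ, HasDerivAt (fun t => t • Ff L t - G t) (Ff L t) t := by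
    intro t
    have h1 : HasDerivAt (fun t : ℝ => t • Ff L t) (t • Ee L t + (1:ℝ) • Ff L t) t :=
      (hasDerivAt_id t).smul (hasDerivAt_F L t)
    have h2 : HasDerivAt G (t • Ee L t) t := (contuE.integral_hasStrictDerivAt 0 t).hasDerivAt
    exact (h1.sub h2).congr_deriv (by simp)
  have hftc : (∫ τ in (0:ℝ)..h, Ff L τ)
      = (h • Ff L h - G h) - ((0:ℝ) • Ff L 0 - G 0) :=
    intervalIntegral.integral_eq_sub_of_hasDerivAt (fun t _ => hD t)
      ((contF L).intervalIntegrable _ _)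
  have hG0 : G 0 = 0 := intervalIntegral.integral_same
  have hrhs : (∫ u in (0:ℝ)..h, (h - u) • Ee L u) = h • Ff L h - G h := by
    have : (∫ u in (0:ℝ)..h, (h - u) • Ee L u)
        = (∫ u in (0:ℝ)..h, h • Ee L u) - ∫ u in (0:ℝ)..h, u • Ee L u := by
      rw [← intervalIntegral.integral_sub (f := fun u => h • Ee L u) (((contE L).const_smul h).intervalIntegrable _ _)
        (contuE.intervalIntegrable _ _)]
      congr 1; funext u; rw [sub_smul]
    rw [this, intervalIntegral.integral_smul]; rfl
  rw [hftc, hrhs, hG0]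
  simp

/-- Right multiplication by a fixed matrix, as a continuous linear map. -/
noncomputable def rmulCLM {m n p : Type*} [Fintype m] [Fintype n] [Fintype p]
    (C : Matrix n p ℝ) : Matrix m n ℝ →L[ℝ] Matrix m p ℝ :=
  LinearMap.toContinuousLinearMap
  { toFun := fun M => M * C
    map_add' := fun A B => Matrix.add_mul A B C
    map_smul' := fun r A => Matrix.smul_mul r A C }

noncomputable def topCLM {m n p : Type*} [Fintype m] [Fintype n] [Fintype p] :
    Matrix m n ℝ →L[ℝ] Matrix (m ⊕ p) n ℝ :=
  LinearMap.toContinuousLinearMap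
  { toFun := fun M => Matrix.fromRows M 0
    map_add' := fun A B => by ext (i|i) j <;> simp
    map_smul' := fun r A => by ext (i|i) j <;> simp }

noncomputable def botCLM {m n p : Type*} [Fintype m] [Fintype n] [Fintype p] :
    Matrix m n ℝ →L[ℝ] Matrix (p ⊕ m) n ℝ :=
  LinearMap.toContinuousLinearMap
  { toFun := fun M => Matrix.fromRows 0 M
    map_add' := fun A B => by ext (i|i) j <;> simp
    map_smul' := fun r A => by ext (i|i) j <;> simp }

lemma integral_fromRows (f g : ℝ → Matrix (Fin d) (Fin d) ℝ) (hf : Continuous f)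
    (hg : Continuous g) (a b : ℝ) :
    (∫ τ in a..b, Matrix.fromRows (f τ) (g τ)) =
      Matrix.fromRows (∫ τ in a..b, f τ) (∫ τ in a..b, g τ) := by
  have hsplit : ∀ (A B : Matrix (Fin d) (Fin d) ℝ),
      Matrix.fromRows A B = topCLM A + botCLM B := by
    intro A B
    ext (i | i) j <;> simp [topCLM, botCLM]
  have h1 : (∫ τ in a..b, Matrix.fromRows (f τ) (g τ))
      = (∫ τ in a..b, topCLM (f τ)) + ∫ τ in a..b, botCLM (g τ) := by
    rw [← intervalIntegral.integral_add
      ((topCLM.continuous.comp hf).intervalIntegrable _ _)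
      ((botCLM.continuous.comp hg).intervalIntegrable _ _)]
    congr 1; funext τ; exact hsplit _ _
  have h2 : (∫ τ in a..b, topCLM (f τ))
      = (topCLM (∫ τ in a..b, f τ) : Matrix (Fin d ⊕ Fin d) (Fin d) ℝ) :=
    ContinuousLinearMap.intervalIntegral_comp_comm _ (hf.intervalIntegrable a b)
  have h3 : (∫ τ in a..b, botCLM (g τ))
      = (botCLM (∫ τ in a..b, g τ) : Matrix (Fin d ⊕ Fin d) (Fin d) ℝ) :=
    ContinuousLinearMap.intervalIntegral_comp_comm _ (hg.intervalIntegrable a b)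
  rw [h1, h2, h3, hsplit]

end Aux

/-- Q(h) Hᵀ = [h²φ₂(Lh); hφ₁(Lh)] for H = [-L, I]. -/
theorem Q_mul_Ht {d : ℕ} (L : Matrix (Fin d) (Fin d) ℝ) (h : ℝ) (hh : 0 < h) :
    Qioup L h * (Matrix.fromCols (-L) 1)ᵀ =
      Matrix.fromRows (h ^ 2 • phiM 2 (h • L)) (h • phiM 1 (h • L)) := by
  have hC : (Matrix.fromCols (-L) 1)ᵀ = Matrix.fromRows (-Lᵀ) (1 : Matrix (Fin d) (Fin d) ℝ) := by
    rw [Matrix.transpose_fromCols, Matrix.transpose_neg, Matrix.transpose_one]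
  have hQ : Qioup L h = ∫ τ in (0:ℝ)..h, Matrix.fromBlocks
      (Ff L τ * (Ff L τ)ᵀ) (Ff L τ * (Ee L τ)ᵀ) (Ee L τ * (Ff L τ)ᵀ) (Ee L τ * (Ee L τ)ᵀ) := by
    unfold Qioup
    congr 1
    funext τ
    rw [← phi1_eq L τ]
    show Matrix.fromBlocks _ _ _ _ =
      Matrix.fromBlocks _ _ _ (NormedSpace.exp (τ • L) * (NormedSpace.exp (τ • L))ᵀ)
    simp [Ee, Matrix.transpose_smul, Matrix.smul_mul, Matrix.mul_smul, smul_smul, pow_two]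
  have hcont : Continuous (fun τ : ℝ => Matrix.fromBlocks
      (Ff L τ * (Ff L τ)ᵀ) (Ff L τ * (Ee L τ)ᵀ) (Ee L τ * (Ff L τ)ᵀ) (Ee L τ * (Ee L τ)ᵀ)) := by
    have cF := contF L
    have cE := contE L
    exact Continuous.matrix_fromBlocks (cF.matrix_mul cF.matrix_transpose)
      (cF.matrix_mul cE.matrix_transpose) (cE.matrix_mul cF.matrix_transpose)
      (cE.matrix_mul cE.matrix_transpose)
  have hkey : ∀ τ : ℝ, (Ff L τ)ᵀ * (-Lᵀ) + (Ee L τ)ᵀ = 1 := by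
    intro τ
    have ht := congrArg Matrix.transpose (keyId L τ)
    rw [Matrix.transpose_mul, Matrix.transpose_sub, Matrix.transpose_one] at ht
    rw [Matrix.mul_neg, ht, neg_sub]
    abel
  have hprod : ∀ τ : ℝ, Matrix.fromBlocks
      (Ff L τ * (Ff L τ)ᵀ) (Ff L τ * (Ee L τ)ᵀ) (Ee L τ * (Ff L τ)ᵀ) (Ee L τ * (Ee L τ)ᵀ)
      * Matrix.fromRows (-Lᵀ) (1 : Matrix (Fin d) (Fin d) ℝ) = Matrix.fromRows (Ff L τ) (Ee L τ) := by
    intro τ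
    rw [Matrix.fromBlocks_mul_fromRows]
    refine congrArg₂ Matrix.fromRows ?_ ?_
    · rw [Matrix.mul_one, Matrix.mul_assoc, ← Matrix.mul_add, hkey, Matrix.mul_one]
    · rw [Matrix.mul_one, Matrix.mul_assoc, ← Matrix.mul_add, hkey, Matrix.mul_one]
  rw [hC, hQ]
  have hl : (∫ τ in (0:ℝ)..h, Matrix.fromBlocks
      (Ff L τ * (Ff L τ)ᵀ) (Ff L τ * (Ee L τ)ᵀ) (Ee L τ * (Ff L τ)ᵀ) (Ee L τ * (Ee L τ)ᵀ))
      * Matrix.fromRows (-Lᵀ) (1 : Matrix (Fin d) (Fin d) ℝ)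
      = ∫ τ in (0:ℝ)..h, (Matrix.fromBlocks
      (Ff L τ * (Ff L τ)ᵀ) (Ff L τ * (Ee L τ)ᵀ) (Ee L τ * (Ff L τ)ᵀ) (Ee L τ * (Ee L τ)ᵀ))
      * Matrix.fromRows (-Lᵀ) (1 : Matrix (Fin d) (Fin d) ℝ) :=
    ((rmulCLM (Matrix.fromRows (-Lᵀ) 1)).intervalIntegral_comp_comm
      (hcont.intervalIntegrable _ _)).symm
  refine hl.trans ?_
  rw [show (∫ τ in (0:ℝ)..h, (Matrix.fromBlocks
      (Ff L τ * (Ff L τ)ᵀ) (Ff L τ * (Ee L τ)ᵀ) (Ee L τ * (Ff L τ)ᵀ) (Ee L τ * (Ee L τ)ᵀ))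
      * Matrix.fromRows (-Lᵀ) (1 : Matrix (Fin d) (Fin d) ℝ))
      = ∫ τ in (0:ℝ)..h, Matrix.fromRows (Ff L τ) (Ee L τ) by
    congr 1; funext τ; exact hprod τ]
  rw [integral_fromRows _ _ (contF L) (contE L)]
  rw [intFF L h, ← phi2_eq L h hh.ne']
  rw [show (∫ τ in (0:ℝ)..h, Ee L τ) = Ff L h from rfl, ← phi1_eq L h]
end

section
/- Consider the mean ODE μ̇(t) = A_IOUP μ(t) with A_IOUP = [[0, I],[0, L]] and initial condition μ(0) = [y₀; L y₀]. Then the first block component μ⁽⁰⁾(t) = exp(Lt) y₀ solves the linear ODE ẏ = L y with y(0) = y₀ exactly. -/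
open Matrix

section Aux

attribute [local instance] Matrix.linftyOpNormedRing Matrix.linftyOpNormedAlgebra

variable {d : ℕ}

/-- `M ↦ (v ↦ M *ᵥ v)` as a continuous linear map into continuous linear maps. -/
noncomputable def toCLM (d : ℕ) :
    Matrix (Fin d) (Fin d) ℝ →L[ℝ] ((Fin d → ℝ) →L[ℝ] (Fin d → ℝ)) :=
  LinearMap.toContinuousLinearMap
    { toFun := fun M => LinearMap.toContinuousLinearMap (Matrix.mulVecLin M)
      map_add' := by
        intro M N; ext v a; simp [Matrix.add_mulVec]
      map_smul' := by
        intro c M; ext v a; simp [Matrix.smul_mulVec] }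

theorem toCLM_apply (M : Matrix (Fin d) (Fin d) ℝ) (v : Fin d → ℝ) :
    toCLM d M v = M.mulVec v := rfl

theorem hasDerivAt_expL (L : Matrix (Fin d) (Fin d) ℝ) (t : ℝ) :
    HasDerivAt (fun s : ℝ => toCLM d (NormedSpace.exp (s • L)))
      (toCLM d (NormedSpace.exp (t • L) * L)) t :=
  (toCLM d).hasFDerivAt.comp_hasDerivAt t (hasDerivAt_exp_smul_const (𝕂 := ℝ) L t)

theorem exp_mul_exp_neg (L : Matrix (Fin d) (Fin d) ℝ) (t : ℝ) :
    NormedSpace.exp (t • L) * NormedSpace.exp (-(t • L)) = 1 := by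
  rw [← Matrix.exp_add_of_commute _ _ (Commute.refl (t • L)).neg_right, add_neg_cancel,
    NormedSpace.exp_zero]

/-- Uniqueness for the linear ODE `v' = L v`. -/
theorem linear_ode_sol (L : Matrix (Fin d) (Fin d) ℝ) (v : ℝ → Fin d → ℝ)
    (hv : ∀ t, HasDerivAt v (L.mulVec (v t)) t) (t : ℝ) :
    v t = (NormedSpace.exp (t • L)).mulVec (v 0) := by
  set w : ℝ → Fin d → ℝ := fun s => toCLM d (NormedSpace.exp (-(s • L))) (v s) with hw_def
  have hw : ∀ s, HasDerivAt w 0 s := by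
    intro s
    have hC := hasDerivAt_expL L (-s)
    rw [neg_smul] at hC
    have hCn : HasDerivAt (fun u : ℝ => toCLM d (NormedSpace.exp (-(u • L))))
        (-(toCLM d (NormedSpace.exp (-(s • L)) * L))) s := by
      have h := hC.scomp s (hasDerivAt_neg s)
      simpa [Function.comp_def] using h
    have h := hCn.clm_apply (hv s)
    have hzero : (-(toCLM d (NormedSpace.exp (-(s • L)) * L))) (v s)
        + toCLM d (NormedSpace.exp (-(s • L))) (L.mulVec (v s)) = 0 := by
      simp only [ContinuousLinearMap.neg_apply, toCLM_apply, Matrix.mulVec_mulVec]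
      simp
    rw [hzero] at h
    exact h
  have hconst : w t = w 0 :=
    is_const_of_deriv_eq_zero (fun s => (hw s).differentiableAt)
      (fun s => (hw s).deriv) t 0
  have hw0 : w 0 = v 0 := by
    simp [hw_def, toCLM_apply]
  have key : toCLM d (NormedSpace.exp (-(t • L))) (v t) = v 0 := hconst.trans hw0
  calc v t = ((NormedSpace.exp (t • L) * NormedSpace.exp (-(t • L))).mulVec (v t)) := by
        rw [exp_mul_exp_neg, Matrix.one_mulVec]
    _ = (NormedSpace.exp (t • L)).mulVec (v 0) := by
        rw [← Matrix.mulVec_mulVec, ← toCLM_apply (NormedSpace.exp (-(t • L))), key]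

end Aux

/-- The mean of the once-integrated Ornstein–Uhlenbeck process with rate L and consistent
initialization μ(0) = [y₀; Ly₀] solves the linear ODE exactly: if μ̇ = A_IOUP μ with
A_IOUP = [[0, I],[0, L]], then the first block μ⁽⁰⁾(t) = exp(Lt) y₀, which solves
ẏ = Ly, y(0) = y₀. -/
theorem ioup_mean_solves_linear_ode {d : ℕ} (L : Matrix (Fin d) (Fin d) ℝ)
    (y₀ : Fin d → ℝ) (μ : ℝ → (Fin d ⊕ Fin d → ℝ))
    (hode : ∀ t, HasDerivAt μ
      ((Matrix.fromBlocks (0 : Matrix (Fin d) (Fin d) ℝ) 1 0 L).mulVec (μ t)) t)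
    (h0 : μ 0 = Sum.elim y₀ (L.mulVec y₀)) :
    (∀ t, (fun a => μ t (Sum.inl a)) = (NormedSpace.exp (t • L)).mulVec y₀) ∧
      (∀ t, HasDerivAt (fun s => (fun a => μ s (Sum.inl a)))
        (L.mulVec (fun a => μ t (Sum.inl a))) t) ∧
      (fun a => μ 0 (Sum.inl a)) = y₀ := by
  classical
  set πl : ((Fin d ⊕ Fin d) → ℝ) →L[ℝ] (Fin d → ℝ) :=
    ContinuousLinearMap.pi (fun a => ContinuousLinearMap.proj (Sum.inl a)) with hπl
  set πr : ((Fin d ⊕ Fin d) → ℝ) →L[ℝ] (Fin d → ℝ) :=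
    ContinuousLinearMap.pi (fun a => ContinuousLinearMap.proj (Sum.inr a)) with hπr
  have hμelim : ∀ t, μ t = Sum.elim (fun a => μ t (Sum.inl a)) (fun a => μ t (Sum.inr a)) := by
    intro t; funext x; rcases x with a | a <;> rfl
  have hA : ∀ t, (Matrix.fromBlocks (0 : Matrix (Fin d) (Fin d) ℝ) 1 0 L).mulVec (μ t)
      = Sum.elim (fun a => μ t (Sum.inr a)) (L.mulVec fun a => μ t (Sum.inr a)) := by
    intro t
    conv_lhs => rw [hμelim t]
    rw [Matrix.fromBlocks_mulVec]
    simp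
  have hd2 : ∀ t, HasDerivAt (fun s => (fun a => μ s (Sum.inr a)))
      (L.mulVec fun a => μ t (Sum.inr a)) t := by
    intro t
    have h := πr.hasFDerivAt.comp_hasDerivAt t (hode t)
    have h1 : (fun s => πr (μ s)) = fun s => (fun a => μ s (Sum.inr a)) := rfl
    have h2 : πr ((Matrix.fromBlocks (0 : Matrix (Fin d) (Fin d) ℝ) 1 0 L).mulVec (μ t))
        = L.mulVec fun a => μ t (Sum.inr a) := by
      rw [hA t]; rfl
    rw [Function.comp_def, h1, h2] at h
    exact h
  have hd1 : ∀ t, HasDerivAt (fun s => (fun a => μ s (Sum.inl a)))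
      (fun a => μ t (Sum.inr a)) t := by
    intro t
    have h := πl.hasFDerivAt.comp_hasDerivAt t (hode t)
    have h1 : (fun s => πl (μ s)) = fun s => (fun a => μ s (Sum.inl a)) := rfl
    have h2 : πl ((Matrix.fromBlocks (0 : Matrix (Fin d) (Fin d) ℝ) 1 0 L).mulVec (μ t))
        = fun a => μ t (Sum.inr a) := by
      rw [hA t]; rfl
    rw [Function.comp_def, h1, h2] at h
    exact h
  have hμ20 : (fun a => μ 0 (Sum.inr a)) = L.mulVec y₀ := by
    funext a; rw [h0]; rfl
  have hμ10 : (fun a => μ 0 (Sum.inl a)) = y₀ := by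
    funext a; rw [h0]; rfl
  have hμ2 : ∀ t, (fun a => μ t (Sum.inr a))
      = (NormedSpace.exp (t • L)).mulVec (L.mulVec y₀) := by
    intro t
    have := linear_ode_sol L (fun s => (fun a => μ s (Sum.inr a))) hd2 t
    rwa [hμ20] at this
  have hexp : ∀ t, HasDerivAt (fun s : ℝ => (NormedSpace.exp (s • L)).mulVec y₀)
      ((NormedSpace.exp (t • L) * L).mulVec y₀) t := by
    intro t
    have h := (hasDerivAt_expL L t).clm_apply (hasDerivAt_const t y₀)
    simpa [toCLM_apply] using h
  have hg : ∀ t, HasDerivAt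
      (fun s : ℝ => (fun a => μ s (Sum.inl a)) - (NormedSpace.exp (s • L)).mulVec y₀)
      0 t := by
    intro t
    have h := (hd1 t).sub (hexp t)
    have hz : (fun a => μ t (Sum.inr a)) - (NormedSpace.exp (t • L) * L).mulVec y₀ = 0 := by
      rw [hμ2 t, Matrix.mulVec_mulVec, sub_self]
    rwa [hz] at h
  have part1 : ∀ t, (fun a => μ t (Sum.inl a)) = (NormedSpace.exp (t • L)).mulVec y₀ := by
    intro t
    have hconst := is_const_of_deriv_eq_zero (f := fun s : ℝ =>
        (fun a => μ s (Sum.inl a)) - (NormedSpace.exp (s • L)).mulVec y₀)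
      (fun s => (hg s).differentiableAt) (fun s => (hg s).deriv) t 0
    have h00 : (fun a => μ (0:ℝ) (Sum.inl a)) - (NormedSpace.exp ((0:ℝ) • L)).mulVec y₀ = 0 := by
      rw [hμ10, zero_smul, NormedSpace.exp_zero, Matrix.one_mulVec, sub_self]
    rw [h00] at hconst
    exact sub_eq_zero.mp hconst
  refine ⟨part1, fun t => ?_, hμ10⟩
  have hcomm : L * NormedSpace.exp (t • L) = NormedSpace.exp (t • L) * L := by
    letI : NormedRing (Matrix (Fin d) (Fin d) ℝ) := Matrix.linftyOpNormedRing
    letI : NormedAlgebra ℝ (Matrix (Fin d) (Fin d) ℝ) := Matrix.linftyOpNormedAlgebra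
    exact (((Commute.refl L).smul_right t).exp_right)
  have heq : (fun a => μ t (Sum.inr a)) = L.mulVec (fun a => μ t (Sum.inl a)) := by
    rw [hμ2 t, part1 t, Matrix.mulVec_mulVec, Matrix.mulVec_mulVec, hcomm]
  rw [← heq]
  exact hd1 t
end

section
/- For the once-integrated Ornstein–Uhlenbeck filter with exact initialization μ₀ = [y₀; Ly₀ + N(y₀)], Σ₀ = 0, the filtering means satisfy μ_n = [y_n; L y_n + N(ỹ_n)] for all n, where ỹ_{n+1} = exp(Lh) y_n + h φ₁(Lh) N(ỹ_n) and y_{n+1} = exp(Lh) y_n + h φ₁(Lh) N(ỹ_n) + h φ₂(Lh)(N(ỹ_{n+1}) - N(ỹ_n)), with ỹ₀ = y₀. I.e., the probabilistic exponential integrator mean equals the classic exponential trapezoidal rule in predict-evaluate-correct mode. -/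
open MeasureTheory Matrix
attribute [local instance] Matrix.frobeniusNormedAddCommGroup Matrix.frobeniusNormedSpace

/-- The classic exponential trapezoidal rule in predict-evaluate-correct mode with
exponential-Euler predictor: returns the pair (y_n, ỹ_n). -/
noncomputable def expTrapezoidal {d : ℕ} (L : Matrix (Fin d) (Fin d) ℝ)
    (N : (Fin d → ℝ) → (Fin d → ℝ)) (h : ℝ) (y₀ : Fin d → ℝ) :
    ℕ → (Fin d → ℝ) × (Fin d → ℝ)
  | 0 => (y₀, y₀)
  | n + 1 =>
    let p := expTrapezoidal L N h y₀ n
    let yt := (NormedSpace.exp (h • L)).mulVec p.1 + h • (phiM 1 (h • L)).mulVec (N p.2)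
    ((NormedSpace.exp (h • L)).mulVec p.1 + h • (phiM 1 (h • L)).mulVec (N p.2) +
        h • (phiM 2 (h • L)).mulVec (N yt - N p.2),
      yt)

/-- The filtering means of the probabilistic exponential integrator with once-integrated
Ornstein–Uhlenbeck prior and exact initialization μ₀ = [y₀; Ly₀ + N(y₀)], Σ₀ = 0:
prediction μ⁻ = Φ(h)μ_n with Φ(h) = [[I, hφ₁(Lh)],[0, exp(Lh)]], residual
ẑ = E₁μ⁻ - (L E₀μ⁻ + N(E₀μ⁻)), Kalman gain K = [hφ₂(Lh); φ₁(Lh)], update μ = μ⁻ - Kẑ. -/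
noncomputable def filterMean {d : ℕ} (L : Matrix (Fin d) (Fin d) ℝ)
    (N : (Fin d → ℝ) → (Fin d → ℝ)) (h : ℝ) (y₀ : Fin d → ℝ) :
    ℕ → (Fin d ⊕ Fin d → ℝ)
  | 0 => Sum.elim y₀ (L.mulVec y₀ + N y₀)
  | n + 1 =>
    let μp := (Matrix.fromBlocks 1 (h • phiM 1 (h • L)) 0
        (NormedSpace.exp (h • L))).mulVec (filterMean L N h y₀ n)
    let yp := fun a => μp (Sum.inl a)
    let z := (fun a => μp (Sum.inr a)) - (L.mulVec yp + N yp)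
    μp - (Matrix.fromRows (h • phiM 2 (h • L)) (phiM 1 (h • L))).mulVec z

section aux
attribute [local instance] Matrix.frobeniusNormedRing Matrix.frobeniusNormedAlgebra

variable {d : ℕ} (M : Matrix (Fin d) (Fin d) ℝ)

noncomputable def matENormedAddMonoid : ENormedAddMonoid (Matrix (Fin d) (Fin d) ℝ) :=
  NormedAddGroup.toENormedAddMonoid
attribute [local instance] matENormedAddMonoid

private lemma intMulLeft (f : ℝ → Matrix (Fin d) (Fin d) ℝ) (hint : IntervalIntegrable f volume 0 1) :
    M * ∫ τ in (0:ℝ)..1, f τ = ∫ τ in (0:ℝ)..1, M * f τ := by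
  have := ContinuousLinearMap.intervalIntegral_comp_comm
    (ContinuousLinearMap.mul ℝ (Matrix (Fin d) (Fin d) ℝ) M) hint
  simpa using this.symm

private lemma intMulRight (f : ℝ → Matrix (Fin d) (Fin d) ℝ) (hint : IntervalIntegrable f volume 0 1) :
    (∫ τ in (0:ℝ)..1, f τ) * M = ∫ τ in (0:ℝ)..1, f τ * M := by
  have := ContinuousLinearMap.intervalIntegral_comp_comm
    ((ContinuousLinearMap.mul ℝ (Matrix (Fin d) (Fin d) ℝ)).flip M) hint
  simpa using this.symm

private lemma expCont : Continuous fun τ : ℝ => NormedSpace.exp ((1 - τ) • M) :=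
  NormedSpace.exp_continuous.comp ((continuous_const.sub continuous_id).smul continuous_const)

private lemma expDeriv (τ₀ : ℝ) :
    HasDerivAt (fun τ : ℝ => NormedSpace.exp ((1 - τ) • M))
      (-(M * NormedSpace.exp ((1 - τ₀) • M))) τ₀ := by
  have h1 : HasDerivAt (fun τ : ℝ => 1 - τ) (-1) τ₀ := (hasDerivAt_id τ₀).const_sub 1
  have h2 := hasDerivAt_exp_smul_const' (𝕂 := ℝ) M (1 - τ₀)
  have := h2.scomp τ₀ h1
  simp only [Function.comp_def, neg_one_smul] at this
  exact this

private lemma phiM_zero : phiM 0 M = NormedSpace.exp M := by simp [phiM]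

private lemma phiM_one : phiM 1 M = ∫ τ in (0:ℝ)..1, NormedSpace.exp ((1 - τ) • M) := by
  simp [phiM]

private lemma phiM_two : phiM 2 M = ∫ τ in (0:ℝ)..1, τ • NormedSpace.exp ((1 - τ) • M) := by
  simp [phiM, Nat.factorial]

private lemma key1 : M * phiM 1 M = NormedSpace.exp M - 1 := by
  rw [phiM_one, intMulLeft M _ ((expCont M).intervalIntegrable _ _)]
  have hderiv : ∀ τ ∈ Set.uIcc (0:ℝ) 1,
      HasDerivAt (fun τ : ℝ => -(NormedSpace.exp ((1 - τ) • M)))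
        (M * NormedSpace.exp ((1 - τ) • M)) τ := fun τ _ => by
    have := (expDeriv M τ).neg
    simp only [neg_neg] at this
    exact this
  have hint2 : IntervalIntegrable (fun τ : ℝ => M * NormedSpace.exp ((1 - τ) • M)) volume 0 1 :=
    (continuous_const.mul (expCont M)).intervalIntegrable _ _
  rw [intervalIntegral.integral_eq_sub_of_hasDerivAt hderiv hint2]
  simp [NormedSpace.exp_zero]
  abel

private lemma key2 : M * phiM 2 M = phiM 1 M - 1 := by
  have hint0 : IntervalIntegrable (fun τ : ℝ => τ • NormedSpace.exp ((1 - τ) • M)) volume 0 1 :=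
    (continuous_id.smul (expCont M)).intervalIntegrable _ _
  rw [phiM_one, phiM_two, intMulLeft M _ hint0]
  have hderiv : ∀ τ ∈ Set.uIcc (0:ℝ) 1,
      HasDerivAt (fun τ : ℝ => τ • NormedSpace.exp ((1 - τ) • M))
        (NormedSpace.exp ((1 - τ) • M) - τ • (M * NormedSpace.exp ((1 - τ) • M))) τ := by
    intro τ _
    have := (hasDerivAt_id τ).smul (expDeriv M τ)
    simp only [smul_neg, id, one_smul] at this
    rw [neg_add_eq_sub] at this
    exact this
  have hintM : IntervalIntegrable (fun τ : ℝ => τ • (M * NormedSpace.exp ((1 - τ) • M))) volume 0 1 :=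
    (continuous_id.smul (continuous_const.mul (expCont M))).intervalIntegrable _ _
  have hintS : IntervalIntegrable (fun τ : ℝ =>
      NormedSpace.exp ((1 - τ) • M) - τ • (M * NormedSpace.exp ((1 - τ) • M))) volume 0 1 :=
    ((expCont M).sub (continuous_id.smul (continuous_const.mul (expCont M)))).intervalIntegrable _ _
  have hFTC := intervalIntegral.integral_eq_sub_of_hasDerivAt hderiv hintS
  rw [intervalIntegral.integral_sub ((expCont M).intervalIntegrable _ _) hintM] at hFTC
  simp only [one_smul, zero_smul, sub_self, zero_smul, sub_zero] at hFTC
  rw [NormedSpace.exp_zero] at hFTC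
  simp only [mul_smul_comm]
  rw [← hFTC]
  abel


private lemma commExpSmul (L : Matrix (Fin d) (Fin d) ℝ) (s t : ℝ) :
    L * NormedSpace.exp (s • t • L) = NormedSpace.exp (s • t • L) * L :=
  ((((Commute.refl L).smul_right t).smul_right s).exp_right).eq

private lemma commPhi (L : Matrix (Fin d) (Fin d) ℝ) (k : ℕ) (t : ℝ) :
    L * phiM k (t • L) = phiM k (t • L) * L := by
  rcases k with _ | k
  · rw [phiM_zero]
    simpa using commExpSmul L 1 t
  · have hc : Continuous fun τ : ℝ => (τ ^ k / (Nat.factorial k : ℝ)) •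
        NormedSpace.exp ((1 - τ) • t • L) :=
      ((continuous_pow k).div_const _).smul (expCont (t • L))
    have hint : IntervalIntegrable (fun τ : ℝ => (τ ^ k / (Nat.factorial k : ℝ)) •
        NormedSpace.exp ((1 - τ) • t • L)) volume 0 1 := hc.intervalIntegrable 0 1
    have hphi : phiM (k + 1) (t • L) = ∫ τ in (0:ℝ)..1,
        (τ ^ k / (Nat.factorial k : ℝ)) • NormedSpace.exp ((1 - τ) • t • L) := by
      simp [phiM]
    rw [hphi, intMulLeft _ _ hint, intMulRight _ _ hint]
    congr 1
    funext τ
    rw [mul_smul_comm, smul_mul_assoc, commExpSmul]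

variable (L : Matrix (Fin d) (Fin d) ℝ) (h : ℝ)

private lemma smul_phi1_L : h • (phiM 1 (h • L) * L) = NormedSpace.exp (h • L) - 1 := by
  rw [← commPhi, ← smul_mul_assoc, key1]

private lemma smul_phi2_L : h • (phiM 2 (h • L) * L) = phiM 1 (h • L) - 1 := by
  rw [← commPhi, ← smul_mul_assoc, key2]

private lemma idv1 (v : Fin d → ℝ) :
    h • (phiM 1 (h • L)).mulVec (L.mulVec v)
      = (NormedSpace.exp (h • L)).mulVec v - v := by
  rw [mulVec_mulVec, ← smul_mulVec, smul_phi1_L, sub_mulVec, one_mulVec]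

private lemma idv2 (v : Fin d → ℝ) :
    h • (phiM 2 (h • L)).mulVec (L.mulVec v) = (phiM 1 (h • L)).mulVec v - v := by
  rw [mulVec_mulVec, ← smul_mulVec, smul_phi2_L, sub_mulVec, one_mulVec]

private lemma idv3 (v : Fin d → ℝ) :
    L.mulVec ((NormedSpace.exp (h • L)).mulVec v)
      = (NormedSpace.exp (h • L)).mulVec (L.mulVec v) := by
  rw [mulVec_mulVec, mulVec_mulVec]
  have := commPhi L 0 h
  rw [phiM_zero] at this
  rw [this]

private lemma idv4 (v : Fin d → ℝ) :
    L.mulVec (h • (phiM 1 (h • L)).mulVec v)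
      = (NormedSpace.exp (h • L)).mulVec v - v := by
  rw [mulVec_smul, mulVec_mulVec, ← smul_mulVec, commPhi, smul_phi1_L,
    sub_mulVec, one_mulVec]

private lemma idv5 (v : Fin d → ℝ) :
    L.mulVec (h • (phiM 2 (h • L)).mulVec v) = (phiM 1 (h • L)).mulVec v - v := by
  rw [mulVec_smul, mulVec_mulVec, ← smul_mulVec, commPhi, smul_phi2_L,
    sub_mulVec, one_mulVec]


end aux

/-- Proposition 2: the probabilistic exponential integrator mean equals the exponential
trapezoidal rule in predict-evaluate-correct mode:
μ_n = [y_n; L y_n + N(ỹ_n)] for all n. -/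
theorem prob_exp_integrator_equiv_trapezoidal {d : ℕ} (L : Matrix (Fin d) (Fin d) ℝ)
    (N : (Fin d → ℝ) → (Fin d → ℝ)) (h : ℝ) (hh : 0 < h) (y₀ : Fin d → ℝ) (n : ℕ) :
    filterMean L N h y₀ n =
      Sum.elim (expTrapezoidal L N h y₀ n).1
        (L.mulVec (expTrapezoidal L N h y₀ n).1 + N (expTrapezoidal L N h y₀ n).2) := by
  induction n with
  | zero => rfl
  | succ n ih =>
    set yn := (expTrapezoidal L N h y₀ n).1 with hyn
    set tn := (expTrapezoidal L N h y₀ n).2 with htn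
    set E := NormedSpace.exp (h • L) with hE
    set P1 := phiM 1 (h • L) with hP1
    set P2 := phiM 2 (h • L) with hP2
    set yt := E.mulVec yn + h • P1.mulVec (N tn) with hyt
    have hstep : expTrapezoidal L N h y₀ (n + 1)
        = (yt + h • P2.mulVec (N yt - N tn), yt) := by
      rw [expTrapezoidal]
    have hμp : (fromBlocks 1 (h • P1) 0 E) *ᵥ (Sum.elim yn (L *ᵥ yn + N tn))
        = Sum.elim yt (E *ᵥ (L *ᵥ yn) + E *ᵥ (N tn)) := by
      have hc1 : (1 : Matrix (Fin d) (Fin d) ℝ) *ᵥ yn + (h • P1) *ᵥ (L *ᵥ yn + N tn) = yt := by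
        rw [one_mulVec, smul_mulVec, mulVec_add, smul_add, idv1, hyt]
        abel
      have hc2 : (0 : Matrix (Fin d) (Fin d) ℝ) *ᵥ yn + E *ᵥ (L *ᵥ yn + N tn)
          = E *ᵥ (L *ᵥ yn) + E *ᵥ (N tn) := by
        rw [zero_mulVec, zero_add, mulVec_add]
      rw [fromBlocks_mulVec, Sum.elim_comp_inl, Sum.elim_comp_inr, hc1, hc2]
    have hLyt : L *ᵥ yt = E *ᵥ (L *ᵥ yn) + (E *ᵥ (N tn) - N tn) := by
      rw [hyt, mulVec_add, idv3, idv4]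
    have hz : (E *ᵥ (L *ᵥ yn) + E *ᵥ (N tn)) - (L *ᵥ yt + N yt) = N tn - N yt := by
      rw [hLyt]; abel
    rw [filterMean, ih, hstep]
    simp only [← hyn, ← htn, ← hE, ← hP1, ← hP2, hμp]
    have hyp : (fun a => Sum.elim yt (E *ᵥ (L *ᵥ yn) + E *ᵥ (N tn)) (Sum.inl a)) = yt := rfl
    have hzp : (fun a => Sum.elim yt (E *ᵥ (L *ᵥ yn) + E *ᵥ (N tn)) (Sum.inr a))
        = E *ᵥ (L *ᵥ yn) + E *ᵥ (N tn) := rfl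
    rw [hyp, hzp, hz, fromRows_mulVec]
    funext x
    cases x with
    | inl a =>
      have htop : yt - (h • P2) *ᵥ (N tn - N yt)
          = yt + h • P2 *ᵥ (N yt - N tn) := by
        rw [smul_mulVec, mulVec_sub, mulVec_sub, smul_sub, smul_sub]
        abel
      simpa using congrFun htop a
    | inr a =>
      have hbot : (E *ᵥ (L *ᵥ yn) + E *ᵥ (N tn)) - P1 *ᵥ (N tn - N yt)
          = L *ᵥ (yt + h • P2 *ᵥ (N yt - N tn)) + N yt := by
        rw [mulVec_add L, idv5, hLyt, mulVec_sub, mulVec_sub]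
        abel
      simpa using congrFun hbot a
end

section
/- For the residual in the IOUP(q=1) exponential-integrator filter step: if μ_n = [y_n; Ly_n + N(ỹ_n)] and μ⁻_{n+1} = Φ(h)μ_n with Φ(h) = [[I, hφ₁(Lh)],[0, exp(Lh)]], then E₁μ⁻_{n+1} - L E₀μ⁻_{n+1} - N(E₀μ⁻_{n+1}) = N(ỹ_n) - N(ỹ_{n+1}), where ỹ_{n+1} := E₀μ⁻_{n+1} = exp(Lh)y_n + hφ₁(Lh)N(ỹ_n). -/
open MeasureTheory Matrix
attribute [local instance] Matrix.frobeniusNormedAddCommGroup Matrix.frobeniusNormedSpace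

attribute [local instance] Matrix.frobeniusNormedRing Matrix.frobeniusNormedAlgebra

/-- The fundamental identity `M φ₁(M) = exp M - I`. -/
lemma mul_phiM_one {d : ℕ} (M : Matrix (Fin d) (Fin d) ℝ) :
    M * phiM 1 M = NormedSpace.exp M - 1 := by
  have hphi : phiM 1 M = ∫ τ in (0:ℝ)..1, NormedSpace.exp ((1 - τ) • M) := by
    simp [phiM]
  have hcont : Continuous fun τ : ℝ => NormedSpace.exp ((1 - τ) • M) := by
    exact (NormedSpace.exp_continuous).comp (by continuity)
  have hint :=
    hcont.intervalIntegrable (μ := volume) 0 1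
  have hderiv : ∀ τ : ℝ, HasDerivAt (fun τ : ℝ => NormedSpace.exp ((1 - τ) • M))
      (-(M * NormedSpace.exp ((1 - τ) • M))) τ := by
    intro τ
    have h1 : HasDerivAt (fun τ : ℝ => 1 - τ) (-1) τ := (hasDerivAt_id τ).const_sub 1
    have h2 := hasDerivAt_exp_smul_const' (𝕂 := ℝ) M (1 - τ)
    have h3 := h2.scomp τ h1
    simp only [neg_one_smul] at h3
    exact h3
  have hcont2 : Continuous fun τ : ℝ => M * NormedSpace.exp ((1 - τ) • M) :=
    (continuous_const.mul hcont)
  have hint2 :=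
    (hcont2.neg).intervalIntegrable (μ := volume) 0 1
  have hftc := intervalIntegral.integral_eq_sub_of_hasDerivAt
    (f := fun τ : ℝ => NormedSpace.exp ((1 - τ) • M))
    (f' := fun τ : ℝ => -(M * NormedSpace.exp ((1 - τ) • M)))
    (fun τ _ => hderiv τ) hint2
  have h10 : (∫ τ in (0:ℝ)..1, -(M * NormedSpace.exp ((1 - τ) • M)))
      = 1 - NormedSpace.exp M := by
    rw [hftc]; simp [NormedSpace.exp_zero]
  have hmul : M * phiM 1 M = ∫ τ in (0:ℝ)..1, M * NormedSpace.exp ((1 - τ) • M) := by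
    rw [hphi]
    exact (ContinuousLinearMap.intervalIntegral_comp_comm
      (ContinuousLinearMap.mul ℝ (Matrix (Fin d) (Fin d) ℝ) M) hint).symm
  rw [hmul]
  have : (∫ τ in (0:ℝ)..1, M * NormedSpace.exp ((1 - τ) • M))
      = -(∫ τ in (0:ℝ)..1, -(M * NormedSpace.exp ((1 - τ) • M))) := by
    rw [intervalIntegral.integral_neg, neg_neg]
  rw [this, h10]
  abel

/-- The residual of the IOUP(q=1) exponential-integrator filter step: with
μ_n = [y_n; Ly_n + N(ỹ_n)], prediction μ⁻ = Φ(h)μ_n where Φ(h) = [[I, hφ₁(Lh)],[0, exp(Lh)]],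
and ỹ_{n+1} := E₀μ⁻ = exp(Lh)y_n + hφ₁(Lh)N(ỹ_n), the residual satisfies
E₁μ⁻ - L E₀μ⁻ - N(E₀μ⁻) = N(ỹ_n) - N(ỹ_{n+1}). -/
theorem residual_formula {d : ℕ} (L : Matrix (Fin d) (Fin d) ℝ)
    (N : (Fin d → ℝ) → (Fin d → ℝ)) (h : ℝ) (hh : 0 < h)
    (yn ytn : Fin d → ℝ) :
    let μp := (Matrix.fromBlocks 1 (h • phiM 1 (h • L)) 0
        (NormedSpace.exp (h • L))).mulVec (Sum.elim yn (L.mulVec yn + N ytn))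
    let ytn1 := fun a => μp (Sum.inl a)
    ((fun a => μp (Sum.inr a)) - L.mulVec ytn1 - N ytn1) = N ytn - N ytn1 := by
  intro μp ytn1
  have key2 : L * (h • phiM 1 (h • L)) = NormedSpace.exp (h • L) - 1 := by
    have hk := mul_phiM_one (h • L)
    rw [smul_mul_assoc] at hk
    rw [mul_smul_comm]
    exact hk
  set v : Fin d → ℝ := L.mulVec yn + N ytn with hv
  have hy1 : ytn1 = yn + (h • phiM 1 (h • L)).mulVec v := by
    funext a
    simp [ytn1, μp, v, Matrix.fromBlocks_mulVec, Matrix.one_mulVec]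
  have hinr : (fun a => μp (Sum.inr a)) = (NormedSpace.exp (h • L)).mulVec v := by
    funext a
    simp [μp, v, Matrix.fromBlocks_mulVec, Matrix.zero_mulVec]
  rw [hinr, hy1, Matrix.mulVec_add L, Matrix.mulVec_mulVec, key2, Matrix.sub_mulVec,
    Matrix.one_mulVec, hv]
  abel
end
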